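/- Let each T'_j be Borel measurable, let C := {x ∈ E : T_i x = x for every i with η_i > 0}, let μ ∈ 𝒫₂(E), and let π be a Borel probability measure whose support is contained in C. Then for EVERY coupling γ of (μ, π): ∫ Σ_{i∈𝕀} η_i ψ_p(x, y, T_i x, T_i y) dγ(x,y) = ∫ ‖x − T_1 x‖² dμ(x), where T_1 x = (T'_1(x),…,T'_m(x)) is the map using all blocks. -/

import Mathlib

open Finset MeasureTheory Filter
open scoped RealInnerProductSpace

noncomputable section

variable {m : ℕ} {I : Type*} [Fintype I]
variable {E : Fin m → Type*} [∀ j, NormedAddCommGroup (E j)]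
  [∀ j, InnerProductSpace ℝ (E j)] [∀ j, FiniteDimensional ℝ (E j)]
variable [∀ j, MeasurableSpace (E j)] [∀ j, BorelSpace (E j)]
variable [MeasurableSpace (PiLp 2 E)] [BorelSpace (PiLp 2 E)]

/-- The blockwise map `T_i`: applies `T'_j` on the blocks `j ∈ M i`, identity elsewhere. -/
def blockMap (M : I → Finset (Fin m)) (T' : ∀ j, PiLp 2 E → E j)
    (i : I) (x : PiLp 2 E) : PiLp 2 E :=
  WithLp.toLp 2 (fun j => if j ∈ M i then T' j x else x j)

/-- The squared weighted norm `‖z‖_p²  =  ∑ⱼ pⱼ⁻¹ ‖zⱼ‖²`. -/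
def wNormSq (pw : Fin m → ℝ) (z : PiLp 2 E) : ℝ :=
  ∑ j, (pw j)⁻¹ * ‖z j‖ ^ 2

/-- The weighted norm `‖z‖_p`. -/
def wNorm (pw : Fin m → ℝ) (z : PiLp 2 E) : ℝ :=
  Real.sqrt (wNormSq pw z)

/-- `γ` is a coupling of `μ` and `ν`. -/
def IsCoupling (γ : Measure (PiLp 2 E × PiLp 2 E)) (μ ν : Measure (PiLp 2 E)) : Prop :=
  IsProbabilityMeasure γ ∧ γ.map Prod.fst = μ ∧ γ.map Prod.snd = ν

/-- The transport cost `(∫ ‖x−y‖_p² dγ)^{1/2}` of a coupling `γ`. -/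
def couplingCost (pw : Fin m → ℝ) (γ : Measure (PiLp 2 E × PiLp 2 E)) : ℝ :=
  Real.sqrt (∫ z, wNormSq pw (z.1 - z.2) ∂γ)

/-- The weighted Wasserstein-2 distance `d_{W2,p}`. -/
def W2 (pw : Fin m → ℝ) (μ ν : Measure (PiLp 2 E)) : ℝ :=
  sInf {r | ∃ γ, IsCoupling γ μ ν ∧ r = couplingCost pw γ}

/-- `γ` is an optimal coupling of `(μ, ν)` w.r.t. `d_{W2,p}`. -/
def IsOptimalCoupling (pw : Fin m → ℝ) (γ : Measure (PiLp 2 E × PiLp 2 E))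
    (μ ν : Measure (PiLp 2 E)) : Prop :=
  IsCoupling γ μ ν ∧ couplingCost pw γ = W2 pw μ ν

/-- The Markov operator `μ ↦ μ𝒫 = ∑ᵢ ηᵢ (Tᵢ)_* μ`. -/
def markovOp (η : I → ℝ) (T : I → PiLp 2 E → PiLp 2 E)
    (μ : Measure (PiLp 2 E)) : Measure (PiLp 2 E) :=
  ∑ i : I, (ENNReal.ofReal (η i)) • μ.map (T i)

/-- `μ ∈ 𝒫₂(G)` : Borel probability measure concentrated on `G` with finite second moment. -/
def MemP2 (G : Set (PiLp 2 E)) (μ : Measure (PiLp 2 E)) : Prop :=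
  IsProbabilityMeasure μ ∧ μ Gᶜ = 0 ∧ Integrable (fun x => ‖x‖ ^ 2) μ

/-- `d_{W2,p}(μ, inv𝒫)` : distance from `μ` to the invariant measures in `𝒫₂(G)`. -/
def dInv (pw : Fin m → ℝ) (η : I → ℝ) (T : I → PiLp 2 E → PiLp 2 E)
    (G : Set (PiLp 2 E)) (μ : Measure (PiLp 2 E)) : ℝ :=
  sInf {r | ∃ π, markovOp η T π = π ∧ MemP2 G π ∧ r = W2 pw μ π}

/-- The expected weighted transport discrepancy `∑ᵢ ηᵢ ψ_p(x, y, Tᵢx, Tᵢy)`. -/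
def discrep (pw : Fin m → ℝ) (η : I → ℝ) (T : I → PiLp 2 E → PiLp 2 E)
    (z : PiLp 2 E × PiLp 2 E) : ℝ :=
  ∑ i : I, η i * wNormSq pw ((z.1 - T i z.1) - (z.2 - T i z.2))

/-- The invariant Markov transport discrepancy `Ψ`. -/
def Psi (pw : Fin m → ℝ) (η : I → ℝ) (T : I → PiLp 2 E → PiLp 2 E)
    (G : Set (PiLp 2 E)) (μ : Measure (PiLp 2 E)) : ℝ :=
  sInf {r | ∃ π γ, markovOp η T π = π ∧ MemP2 G π ∧ IsOptimalCoupling pw γ μ π ∧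
    r = Real.sqrt (∫ z, discrep pw η T z ∂γ)}

lemma blockMap_measurable (M : I → Finset (Fin m)) (T' : ∀ j, PiLp 2 E → E j)
    (hmeas : ∀ j, Measurable (T' j)) (i : I) : Measurable (blockMap M T' i) := by
  let e := (PiLp.continuousLinearEquiv 2 ℝ E).toHomeomorph
  have h1 : Measurable (fun x : PiLp 2 E => (e (blockMap M T' i x))) := by
    rw [measurable_pi_iff]
    intro j
    by_cases h : j ∈ M i
    · simpa [blockMap, e, h] using hmeas j
    · simp [blockMap, e, h]; exact (measurable_pi_apply j).comp e.measurable
  have : blockMap M T' i = fun x => e.symm (e (blockMap M T' i x)) := by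
    funext x; simp
  rw [this]
  exact e.symm.measurable.comp h1

lemma sum_discrep_eq (M : I → Finset (Fin m)) (i₁ : I) (hi₁ : M i₁ = Finset.univ)
    (η : I → ℝ) (pw : Fin m → ℝ) (hpw : ∀ j, pw j = ∑ i : I, if j ∈ M i then η i else 0)
    (hp : ∀ j, 0 < pw j) (T' : ∀ j, PiLp 2 E → E j) (x : PiLp 2 E) :
    ∑ i : I, η i * wNormSq pw (x - blockMap M T' i x) = ‖x - blockMap M T' i₁ x‖ ^ 2 := by
  have hsub : ∀ i j, (x - blockMap M T' i x) j
      = x j - (if j ∈ M i then T' j x else x j) := fun i j => rfl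
  have hterm : ∀ i, wNormSq pw (x - blockMap M T' i x)
      = ∑ j, if j ∈ M i then (pw j)⁻¹ * ‖x j - T' j x‖ ^ 2 else 0 := by
    intro i
    unfold wNormSq
    refine Finset.sum_congr rfl fun j _ => ?_
    rw [hsub]
    by_cases h : j ∈ M i <;> simp [h]
  calc ∑ i : I, η i * wNormSq pw (x - blockMap M T' i x)
      = ∑ i : I, ∑ j, if j ∈ M i then η i * ((pw j)⁻¹ * ‖x j - T' j x‖ ^ 2) else 0 := by
        refine Finset.sum_congr rfl fun i _ => ?_
        rw [hterm, Finset.mul_sum]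
        exact Finset.sum_congr rfl fun j _ => by by_cases h : j ∈ M i <;> simp [h]
    _ = ∑ j, ∑ i : I, if j ∈ M i then η i * ((pw j)⁻¹ * ‖x j - T' j x‖ ^ 2) else 0 :=
        Finset.sum_comm
    _ = ∑ j, (∑ i : I, if j ∈ M i then η i else 0) * ((pw j)⁻¹ * ‖x j - T' j x‖ ^ 2) := by
        refine Finset.sum_congr rfl fun j _ => ?_
        rw [Finset.sum_mul]
        exact Finset.sum_congr rfl fun i _ => by by_cases h : j ∈ M i <;> simp [h]
    _ = ∑ j, ‖x j - T' j x‖ ^ 2 := by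
        refine Finset.sum_congr rfl fun j _ => ?_
        rw [← hpw j, ← mul_assoc, mul_inv_cancel₀ (hp j).ne', one_mul]
    _ = ‖x - blockMap M T' i₁ x‖ ^ 2 := by
        rw [PiLp.norm_sq_eq_of_L2]
        refine Finset.sum_congr rfl fun j _ => ?_
        rw [hsub]
        simp [hi₁]

/-- for every coupling `γ` of `μ` and a measure `π` concentrated on the common
fixed point set `C`, the expected transport discrepancy equals the mean squared fixed-point
residual of `T₁` w.r.t. `μ`. -/
theorem statement15
    (M : I → Finset (Fin m)) (hM : ∀ i, (M i).Nonempty)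
    (i₁ : I) (hi₁ : M i₁ = Finset.univ)
    (η : I → ℝ) (hη : ∀ i, 0 ≤ η i) (hηsum : ∑ i : I, η i = 1)
    (pw : Fin m → ℝ) (hpw : ∀ j, pw j = ∑ i : I, if j ∈ M i then η i else 0)
    (hp : ∀ j, 0 < pw j)
    (T' : ∀ j, PiLp 2 E → E j) (hmeas : ∀ j, Measurable (T' j))
    (C : Set (PiLp 2 E))
    (hC : C = {x : PiLp 2 E | ∀ i, 0 < η i → blockMap M T' i x = x})
    (μ : Measure (PiLp 2 E)) (hμ : MemP2 Set.univ μ)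
    (π : Measure (PiLp 2 E)) (hπ : IsProbabilityMeasure π) (hπC : π Cᶜ = 0)
    (γ : Measure (PiLp 2 E × PiLp 2 E)) (hγ : IsCoupling γ μ π) :
    ∫ z, discrep pw η (blockMap M T') z ∂γ
      = ∫ x, ‖x - blockMap M T' i₁ x‖ ^ 2 ∂μ := by
  obtain ⟨hγprob, hγ1, hγ2⟩ := hγ
  -- γ-a.e., the second coordinate lies in C
  have hae : ∀ᵐ z ∂γ, z.2 ∈ C := by
    have hle : γ (Prod.snd ⁻¹' Cᶜ) ≤ (γ.map Prod.snd) Cᶜ :=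
      Measure.le_map_apply measurable_snd.aemeasurable _
    rw [hγ2, hπC] at hle
    refine measure_mono_null (fun z hz => ?_) (le_antisymm hle zero_le)
    exact hz
  -- a.e. pointwise identity
  have hcongr : ∀ᵐ z ∂γ, discrep pw η (blockMap M T') z
      = ‖z.1 - blockMap M T' i₁ z.1‖ ^ 2 := by
    filter_upwards [hae] with z hz
    rw [← sum_discrep_eq M i₁ hi₁ η pw hpw hp T' z.1]
    unfold discrep
    refine Finset.sum_congr rfl fun i _ => ?_
    rcases eq_or_lt_of_le (hη i) with h0 | h0
    · simp [← h0]
    · have : blockMap M T' i z.2 = z.2 := by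
        rw [hC] at hz; exact hz i h0
      rw [this, sub_self, sub_zero]
  rw [integral_congr_ae hcongr, ← hγ1]
  have hmf : Measurable (fun x : PiLp 2 E => ‖x - blockMap M T' i₁ x‖ ^ 2) :=
    ((measurable_id.sub (blockMap_measurable M T' hmeas i₁)).norm.pow measurable_const)
  rw [integral_map measurable_fst.aemeasurable hmf.aestronglyMeasurable]
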